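/- Let F be a field of characteristic ≠ 2, and let T be a strictly lower triangular n×n matrix in first reduced echelon form (1-REF). If A(T) ≅ A(0_n) as graded algebras, then T = 0_n. -/

import Mathlib

open MvPolynomial

noncomputable section

variable (F : Type) [Field F]

/-- The defining relations of the nil graded algebra `A(T)`. -/
def relSet {n : ℕ} (T : Matrix (Fin n) (Fin n) F) : Set (MvPolynomial (Fin n) F) :=
  { p | ∃ i : Fin n,
      p = X i ^ 2 - ∑ j ∈ Finset.univ.filter (fun j => j < i), C (T i j) * X j * X i }

/-- The nil graded algebra `A(T)` associated to a strictly lower triangular matrix `T`. -/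
abbrev NTAlg {n : ℕ} (T : Matrix (Fin n) (Fin n) F) : Type :=
  MvPolynomial (Fin n) F ⧸ Ideal.span (relSet F T)

/-- The generators `X i` of `A(T)`. -/
def NTgen {n : ℕ} (T : Matrix (Fin n) (Fin n) F) (i : Fin n) : NTAlg F T :=
  Ideal.Quotient.mk _ (X i)

/-- An algebra isomorphism is degree preserving iff it (and its inverse) maps the span
of the degree-2 generators into the span of the degree-2 generators. -/
def IsGradedIso {n : ℕ} {T S : Matrix (Fin n) (Fin n) F}
    (e : NTAlg F T ≃ₐ[F] NTAlg F S) : Prop :=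
  (∀ j, e (NTgen F T j) ∈ Submodule.span F (Set.range (NTgen F S))) ∧
  (∀ j, e.symm (NTgen F S j) ∈ Submodule.span F (Set.range (NTgen F T)))

/-- `A(T)` and `A(S)` are isomorphic in the category 𝒩𝒯. -/
def NTIso {n : ℕ} (T S : Matrix (Fin n) (Fin n) F) : Prop :=
  ∃ e : NTAlg F T ≃ₐ[F] NTAlg F S, IsGradedIso F e

/-- A matrix is strictly lower triangular. -/
def SLTM {n : ℕ} (T : Matrix (Fin n) (Fin n) F) : Prop :=
  ∀ i j : Fin n, i ≤ j → T i j = 0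

/-- The key system of equations (Theorem `theo-Key-condition`). -/
def KeyEq {n : ℕ} (T S Γ : Matrix (Fin n) (Fin n) F) : Prop :=
  ∀ r i k : Fin n, i < k →
    2 * Γ i r * Γ k r + Γ k r ^ 2 * S k i =
      ∑ j ∈ Finset.univ.filter (fun j => j < r),
        T r j * (Γ k j * Γ k r * S k i + Γ k j * Γ i r + Γ i j * Γ k r)

/-- `(r,c)` is the leader position of row `r`: the last nonzero entry of the row. -/
def IsLeader {n : ℕ} (T : Matrix (Fin n) (Fin n) F) (r c : Fin n) : Prop :=
  T r c ≠ 0 ∧ ∀ j, c < j → T r j = 0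

/-- First reduced echelon form (1-REF), 0-indexed version of Definition 3.1. -/
def Is1REF {n : ℕ} (T : Matrix (Fin n) (Fin n) F) : Prop :=
  (∀ r r' : Fin n, (∃ c, T r c ≠ 0) → r ≤ r' → ∃ c, T r' c ≠ 0) ∧
  (∀ r c : Fin n, IsLeader F T r c →
      0 < (c : ℕ) ∧ ∃ i : Fin n, i < c ∧ 2 * T r i + T r c * T c i ≠ 0) ∧
  (∀ r r' c c' : Fin n, r ≤ r' → IsLeader F T r c → IsLeader F T r' c' → c ≤ c')


namespace Stmt19

variable {F : Type} [Field F] {n : ℕ}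

-- === monomial/finsupp helpers ===
lemma deg_single (i : Fin n) (k : ℕ) : (Finsupp.single i k).degree = k := by
  rcases eq_or_ne k 0 with rfl | h
  · simp [Finsupp.degree]
  · simp [Finsupp.degree_apply, Finsupp.support_single_ne_zero _ h]

lemma deg_add (a b : Fin n →₀ ℕ) : (a + b).degree = a.degree + b.degree := by
  simp [Finsupp.degree_eq_weight_one, map_add]

lemma toM_inj : Function.Injective (Finsupp.toMultiset : (Fin n →₀ ℕ) → Multiset (Fin n)) :=
  fun a b h => by
    simpa using congrArg Multiset.toFinsupp h

lemma toM_pair (l m : Fin n) :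
    Finsupp.toMultiset (Finsupp.single l 1 + Finsupp.single m 1) = l ::ₘ {m} := by
  simp [Finsupp.toMultiset_add]

lemma toM_two (i : Fin n) :
    Finsupp.toMultiset (Finsupp.single i 2) = i ::ₘ {i} := by
  simp [Finsupp.toMultiset_single]
  rfl

lemma finsupp_pair_eq_iff (l m j i : Fin n) :
    (Finsupp.single l 1 + Finsupp.single m 1 : Fin n →₀ ℕ)
      = Finsupp.single j 1 + Finsupp.single i 1 ↔ (l = j ∧ m = i) ∨ (l = i ∧ m = j) := by
  rw [← toM_inj.eq_iff, toM_pair, toM_pair, Multiset.cons_eq_cons]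
  constructor
  · rintro (⟨rfl, hm⟩ | ⟨hne, cs, h1, h2⟩)
    · exact Or.inl ⟨rfl, Multiset.singleton_inj.mp hm⟩
    · obtain ⟨rfl, rfl⟩ := (Multiset.singleton_eq_cons_iff _).mp h1
      obtain ⟨rfl, -⟩ := (Multiset.singleton_eq_cons_iff _).mp h2
      exact Or.inr ⟨rfl, rfl⟩
  · rintro (⟨rfl, rfl⟩ | ⟨rfl, rfl⟩)
    · exact Or.inl ⟨rfl, rfl⟩
    · rcases eq_or_ne l m with rfl | hne
      · exact Or.inl ⟨rfl, rfl⟩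
      · exact Or.inr ⟨hne, 0, by simp, by simp⟩

lemma finsupp_pair_eq_two_iff (s t i : Fin n) :
    (Finsupp.single s 1 + Finsupp.single t 1 : Fin n →₀ ℕ) = Finsupp.single i 2
      ↔ s = i ∧ t = i := by
  rw [← toM_inj.eq_iff, toM_pair, toM_two, Multiset.cons_eq_cons]
  constructor
  · rintro (⟨rfl, hm⟩ | ⟨hne, cs, h1, h2⟩)
    · exact ⟨rfl, Multiset.singleton_inj.mp hm⟩
    · obtain ⟨rfl, rfl⟩ := (Multiset.singleton_eq_cons_iff _).mp h1
      obtain ⟨rfl, -⟩ := (Multiset.singleton_eq_cons_iff _).mp h2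
      exact absurd rfl hne
  · rintro ⟨rfl, rfl⟩
    exact Or.inl ⟨rfl, rfl⟩

lemma single_one_add_ne (j i m : Fin n) (hji : j ≠ i) :
    (Finsupp.single j 1 + Finsupp.single i 1 : Fin n →₀ ℕ) ≠ Finsupp.single m 2 := by
  intro hEq
  obtain ⟨rfl, rfl⟩ := (finsupp_pair_eq_two_iff j i m).mp hEq
  exact hji rfl

-- === basic monomial forms ===
lemma CXX (a : F) (l m : Fin n) :
    C a * X l * X m
      = monomial (Finsupp.single l 1 + Finsupp.single m 1) a := by
  rw [C_apply, X, X, monomial_mul, monomial_mul]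
  simp

-- === homogeneity ===
lemma relSet_homog (T : Matrix (Fin n) (Fin n) F) {g : MvPolynomial (Fin n) F}
    (hg : g ∈ relSet F T) : g.IsHomogeneous 2 := by
  obtain ⟨i, rfl⟩ := hg
  apply MvPolynomial.IsHomogeneous.sub
  · simpa using (isHomogeneous_X F i).pow 2
  · apply MvPolynomial.IsHomogeneous.sum
    intro j _
    rw [CXX]
    exact isHomogeneous_monomial _ (by rw [deg_add, deg_single, deg_single])

lemma coeff_mul_homog (f g : MvPolynomial (Fin n) F) (hg : g.IsHomogeneous 2)
    (μ : Fin n →₀ ℕ) (hμ : μ.degree ≤ 2) :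
    coeff μ (f * g) = coeff 0 f * coeff μ g := by
  classical
  rw [coeff_mul, Finset.sum_eq_single ((0 : Fin n →₀ ℕ), μ)]
  · rintro ⟨a, b⟩ hab hne
    rw [Finset.HasAntidiagonal.mem_antidiagonal] at hab
    by_cases hb : coeff b g = 0
    · simp [hb]
    · have hbd : b.degree = 2 := by
        by_contra hx; exact hb (hg.coeff_eq_zero hx)
      have hsum : a.degree + b.degree = μ.degree := by rw [← deg_add, hab]
      have ha0 : a.degree = 0 := by omega
      have ha : a = 0 := (Finsupp.degree_eq_zero_iff a).mp ha0
      subst ha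
      rw [zero_add] at hab
      exact absurd (by rw [Prod.mk.injEq]; exact ⟨rfl, hab⟩) hne
  · intro hmem
    exact absurd (Finset.HasAntidiagonal.mem_antidiagonal.mpr (zero_add μ)) hmem

/-- Any linear coefficient-functional supported in degree ≤ 2 monomials that kills the
generators kills the whole ideal (in the relevant coefficients). -/
lemma span_coeff_combo (T : Matrix (Fin n) (Fin n) F) {q : MvPolynomial (Fin n) F}
    (hq : q ∈ Ideal.span (relSet F T))
    (D : Finset (Fin n →₀ ℕ)) (w : (Fin n →₀ ℕ) → F)
    (hD : ∀ μ ∈ D, μ.degree ≤ 2)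
    (hgen : ∀ g ∈ relSet F T, ∑ μ ∈ D, w μ * coeff μ g = 0) :
    ∑ μ ∈ D, w μ * coeff μ q = 0 := by
  classical
  obtain ⟨c, hc, rfl⟩ := Submodule.mem_span_set.mp hq
  rw [Finsupp.sum]
  have : ∀ μ, coeff μ (∑ g ∈ c.support, c g • g) = ∑ g ∈ c.support, coeff μ (c g * g) := by
    intro μ
    rw [coeff_sum]
    simp [smul_eq_mul]
  simp_rw [this, Finset.mul_sum]
  rw [Finset.sum_comm]
  apply Finset.sum_eq_zero
  intro g hgmem
  have hgrel : g ∈ relSet F T := hc hgmem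
  have heach : ∀ μ ∈ D, w μ * coeff μ (c g * g) = coeff 0 (c g) * (w μ * coeff μ g) := by
    intro μ hμ
    rw [coeff_mul_homog _ _ (relSet_homog T hgrel) _ (hD μ hμ)]
    ring
  rw [Finset.sum_congr rfl heach, ← Finset.mul_sum, hgen g hgrel, mul_zero]

end Stmt19

namespace Stmt19
variable {F : Type} [Field F] {n : ℕ}

/-- Degree-1 coefficients of ideal elements vanish. -/
lemma span_coeff_lin (T : Matrix (Fin n) (Fin n) F) {q : MvPolynomial (Fin n) F}
    (hq : q ∈ Ideal.span (relSet F T)) (s : Fin n) :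
    coeff (Finsupp.single s 1) q = 0 := by
  classical
  have := span_coeff_combo T hq {Finsupp.single s 1} (fun _ => 1)
    (by intro μ hμ; rw [Finset.mem_singleton] at hμ; subst hμ; rw [deg_single]; omega)
    (by intro g hg
        rw [Finset.sum_singleton, one_mul]
        exact (relSet_homog T hg).coeff_eq_zero (by rw [deg_single]; omega))
  simpa using this

/-- The key quadratic coefficient relation for ideal elements. -/
lemma span_coeff_quad (T : Matrix (Fin n) (Fin n) F) {q : MvPolynomial (Fin n) F}
    (hq : q ∈ Ideal.span (relSet F T)) {j i : Fin n} (hji : j < i) :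
    coeff (Finsupp.single j 1 + Finsupp.single i 1) q
      + T i j * coeff (Finsupp.single i 2) q = 0 := by
  classical
  set μ1 : Fin n →₀ ℕ := Finsupp.single j 1 + Finsupp.single i 1 with hμ1
  set μ2 : Fin n →₀ ℕ := Finsupp.single i 2 with hμ2
  have hμne : μ1 ≠ μ2 := single_one_add_ne j i i hji.ne
  have hgen : ∀ g ∈ relSet F T,
      coeff μ1 g + T i j * coeff μ2 g = 0 := by
    rintro g ⟨m, rfl⟩
    have hc1 : coeff μ1 (X m ^ 2 : MvPolynomial (Fin n) F) = 0 := by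
      rw [X_pow_eq_monomial, coeff_monomial,
        if_neg (fun hcon => single_one_add_ne j i m hji.ne hcon.symm)]
    have hc2 : coeff μ2 (X m ^ 2 : MvPolynomial (Fin n) F) = if m = i then 1 else 0 := by
      rw [X_pow_eq_monomial, coeff_monomial]
      by_cases hmi : m = i
      · subst hmi; rw [if_pos rfl, if_pos rfl]
      · rw [if_neg (fun hcon => hmi ((Finsupp.single_left_inj (by omega)).mp hcon)),
          if_neg hmi]
    have hs1 : coeff μ1 (∑ l ∈ Finset.univ.filter (fun l => l < m), C (T m l) * X l * X m)
        = if m = i then T i j else 0 := by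
      rw [coeff_sum]
      simp_rw [CXX, coeff_monomial]
      by_cases hmi : m = i
      · rw [if_pos hmi]
        have hcong : ∀ l ∈ Finset.univ.filter (fun l => l < m),
            (if (Finsupp.single l 1 + Finsupp.single m 1 : Fin n →₀ ℕ) = μ1
              then T m l else 0) = if l = j then T m l else 0 := by
          intro l hl
          rw [Finset.mem_filter] at hl
          by_cases hlj : l = j
          · rw [if_pos hlj, if_pos (show (Finsupp.single l 1 + Finsupp.single m 1 : Fin n →₀ ℕ) = μ1 by
              rw [hμ1]; exact (finsupp_pair_eq_iff l m j i).mpr (Or.inl ⟨hlj, hmi⟩))]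
          · rw [if_neg hlj, if_neg]
            intro hcon
            rw [hμ1] at hcon
            rcases (finsupp_pair_eq_iff l m j i).mp hcon with ⟨h1, -⟩ | ⟨hli, hmj⟩
            · exact hlj h1
            · exact absurd hji (by rw [← hli, ← hmj]; exact not_lt.mpr hl.2.le)
        rw [Finset.sum_congr rfl hcong, Finset.sum_ite_eq',
          if_pos (by rw [Finset.mem_filter]; exact ⟨Finset.mem_univ _, by rw [hmi]; exact hji⟩), hmi]
      · rw [if_neg hmi]
        apply Finset.sum_eq_zero
        intro l hl
        rw [Finset.mem_filter] at hl
        rw [if_neg]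
        intro hcon
        rw [hμ1] at hcon
        rcases (finsupp_pair_eq_iff l m j i).mp hcon with ⟨-, h2⟩ | ⟨hli, hmj⟩
        · exact hmi h2
        · exact absurd hji (by rw [← hli, ← hmj]; exact not_lt.mpr hl.2.le)
    have hs2 : coeff μ2 (∑ l ∈ Finset.univ.filter (fun l => l < m), C (T m l) * X l * X m)
        = 0 := by
      rw [coeff_sum]
      apply Finset.sum_eq_zero
      intro l hl
      rw [Finset.mem_filter] at hl
      rw [CXX, coeff_monomial, if_neg]
      intro hcon
      obtain ⟨h1, h2⟩ := (finsupp_pair_eq_two_iff l m i).mp hcon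
      exact absurd (h1.trans h2.symm) (ne_of_lt hl.2)
    rw [coeff_sub, coeff_sub, hc1, hc2, hs1, hs2, sub_zero, zero_sub]
    by_cases hmi : m = i <;> simp [hmi]
  have := span_coeff_combo T hq {μ1, μ2}
    (fun μ => if μ = μ1 then 1 else T i j)
    (by
      intro μ hμ
      rw [Finset.mem_insert, Finset.mem_singleton] at hμ
      rcases hμ with rfl | rfl
      · rw [hμ1, deg_add, deg_single, deg_single]
      · rw [hμ2, deg_single])
    (by
      intro g hg
      simpa [Finset.sum_pair hμne, Ne.symm hμne] using hgen g hg)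
  simpa [Finset.sum_pair hμne, Ne.symm hμne] using this

lemma CXCX (a b : F) (s t : Fin n) :
    (C a * X s) * (C b * X t)
      = monomial (Finsupp.single s 1 + Finsupp.single t 1) (a * b) := by
  rw [← CXX, C_mul]
  ring

/-- Pair coefficient of the square of a linear form. -/
lemma coeff_sq_pair (Γ : Fin n → F) {j i : Fin n} (hji : j ≠ i) :
    coeff (Finsupp.single j 1 + Finsupp.single i 1)
      ((∑ s, C (Γ s) * X s) ^ 2) = 2 * (Γ j * Γ i) := by
  classical
  rw [sq, Finset.sum_mul_sum, coeff_sum]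
  simp_rw [coeff_sum, CXCX, coeff_monomial, ← Finset.sum_product']
  rw [Finset.sum_eq_add_of_mem (j, i) (i, j) (by simp) (by simp)
      (by intro hcon; rw [Prod.mk.injEq] at hcon; exact hji hcon.1)]
  · rw [if_pos rfl, if_pos (add_comm _ _)]
    ring
  · rintro ⟨s, t⟩ - ⟨hne1, hne2⟩
    rw [if_neg]
    intro hcon
    rcases (finsupp_pair_eq_iff s t j i).mp hcon with ⟨h1, h2⟩ | ⟨h1, h2⟩
    · exact hne1 (by rw [Prod.mk.injEq]; exact ⟨h1, h2⟩)
    · exact hne2 (by rw [Prod.mk.injEq]; exact ⟨h1, h2⟩)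

/-- Square coefficient of the square of a linear form. -/
lemma coeff_sq_diag (Γ : Fin n → F) (i : Fin n) :
    coeff (Finsupp.single i 2) ((∑ s, C (Γ s) * X s) ^ 2) = Γ i ^ 2 := by
  classical
  rw [sq, Finset.sum_mul_sum, coeff_sum]
  simp_rw [coeff_sum, CXCX, coeff_monomial, ← Finset.sum_product']
  rw [Finset.sum_eq_single (i, i)]
  · rw [if_pos (by rw [← Finsupp.single_add])]
    ring
  · rintro ⟨s, t⟩ - hne
    rw [if_neg]
    intro hcon
    obtain ⟨rfl, rfl⟩ := (finsupp_pair_eq_two_iff s t i).mp hcon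
    exact hne rfl
  · intro hmem
    exact absurd (Finset.mem_product.mpr ⟨Finset.mem_univ _, Finset.mem_univ _⟩) hmem

end Stmt19

namespace Stmt19
variable {F : Type} [Field F] {n : ℕ}

lemma mk_linear (T : Matrix (Fin n) (Fin n) F) (a : Fin n → F) :
    Ideal.Quotient.mk (Ideal.span (relSet F T)) (∑ s, C (a s) * X s)
      = ∑ s, a s • NTgen F T s := by
  rw [show Ideal.Quotient.mk (Ideal.span (relSet F T))
      = ⇑(Ideal.Quotient.mkₐ F (Ideal.span (relSet F T))) from rfl, map_sum]
  refine Finset.sum_congr rfl fun s _ => ?_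
  rw [← MvPolynomial.smul_eq_C_mul]
  exact map_smul (Ideal.Quotient.mkₐ F (Ideal.span (relSet F T))) _ _

lemma NTgen0_sq (k : Fin n) : (NTgen F (0 : Matrix (Fin n) (Fin n) F) k) ^ 2 = 0 := by
  have hmem : (X k ^ 2 : MvPolynomial (Fin n) F) ∈ relSet F 0 := ⟨k, by simp⟩
  rw [NTgen, ← map_pow, Ideal.Quotient.eq_zero_iff_mem]
  exact Ideal.subset_span hmem

end Stmt19

open Stmt19 in
theorem stmt19' {n : ℕ} (h2 : (2 : F) ≠ 0) (T : Matrix (Fin n) (Fin n) F)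
    (hT : SLTM F T) (hREF : Is1REF F T) (h : NTIso F T 0) :
    T = 0 := by
  classical
  by_contra hne
  have hex : ∃ r c0, T r c0 ≠ 0 := by
    by_contra hall
    push_neg at hall
    exact hne (Matrix.ext fun i j => by rw [hall i j, Matrix.zero_apply])
  obtain ⟨r, c0, hc0⟩ := hex
  set Sset := Finset.univ.filter (fun c => T r c ≠ 0) with hSset
  have hSne : Sset.Nonempty := ⟨c0, Finset.mem_filter.mpr ⟨Finset.mem_univ _, hc0⟩⟩
  set c := Sset.max' hSne with hcdef
  have hTrc : T r c ≠ 0 := (Finset.mem_filter.mp (Sset.max'_mem hSne)).2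
  have hlead : IsLeader F T r c := by
    refine ⟨hTrc, fun j hj => ?_⟩
    by_contra hTj
    exact absurd (Sset.le_max' j (Finset.mem_filter.mpr ⟨Finset.mem_univ _, hTj⟩))
      (not_le.mpr hj)
  obtain ⟨-, i₀, hi₀c, hkey⟩ := hREF.2.1 r c hlead
  have hcr : c < r := by
    by_contra hle
    exact hTrc (hT r c (not_lt.mp hle))
  obtain ⟨e, he1, he2⟩ := h
  have hrep : ∀ k, ∃ γ : Fin n → F, ∑ s, γ s • NTgen F T s = e.symm (NTgen F 0 k) :=
    fun k => (Submodule.mem_span_range_iff_exists_fun F).mp (he2 k)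
  choose Γ hΓ using hrep
  have hsq : ∀ k, ((∑ s, C (Γ k s) * X s : MvPolynomial (Fin n) F)) ^ 2
      ∈ Ideal.span (relSet F T) := by
    intro k
    rw [← Ideal.Quotient.eq_zero_iff_mem, map_pow, mk_linear, hΓ k, ← map_pow,
      NTgen0_sq, map_zero]
  have KR : ∀ k : Fin n, ∀ {j i : Fin n}, j < i →
      2 * (Γ k j * Γ k i) + T i j * Γ k i ^ 2 = 0 := by
    intro k j i hji
    have := span_coeff_quad T (hsq k) hji
    rwa [coeff_sq_pair (Γ k) hji.ne, coeff_sq_diag (Γ k)] at this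
  have hcol : ∀ k, Γ k r = 0 := by
    intro k
    by_contra hkr
    have E1 := KR k hcr
    have E2 := KR k (hi₀c.trans hcr)
    have E3 := KR k hi₀c
    have d1 : 2 * Γ k c = -(T r c * Γ k r) :=
      mul_right_cancel₀ hkr (by linear_combination E1)
    have d2 : 2 * Γ k i₀ = -(T r i₀ * Γ k r) :=
      mul_right_cancel₀ hkr (by linear_combination E2)
    have key : T r c * Γ k r ^ 2 * (2 * T r i₀ + T r c * T c i₀) = 0 := by
      linear_combination 4 * E3
        + (2 * T r i₀ * Γ k r + T r c * T c i₀ * Γ k r - 2 * T c i₀ * Γ k c) * d1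
        + (-(4 * Γ k c)) * d2
    rcases mul_eq_zero.mp key with hA | hB
    · rcases mul_eq_zero.mp hA with hh | hh
      · exact hTrc hh
      · exact pow_ne_zero 2 hkr hh
    · exact hkey hB
  obtain ⟨δ, hδ⟩ := (Submodule.mem_span_range_iff_exists_fun F).mp (he1 r)
  set b : Fin n → F := fun s => ∑ k, δ k * Γ k s with hb
  have hgenr : NTgen F T r = ∑ s, b s • NTgen F T s := by
    calc NTgen F T r = e.symm (e (NTgen F T r)) := (e.symm_apply_apply _).symm
      _ = e.symm (∑ k, δ k • NTgen F 0 k) := by rw [hδ]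
      _ = ∑ k, δ k • e.symm (NTgen F 0 k) := by
          have hms := map_sum e.symm.toLinearMap (fun k => δ k • NTgen F 0 k) Finset.univ
          simp only [map_smul, AlgEquiv.toLinearMap_apply] at hms
          exact hms
      _ = ∑ k, δ k • (∑ s, Γ k s • NTgen F T s) := by simp_rw [hΓ]
      _ = ∑ s, b s • NTgen F T s := by
          simp_rw [Finset.smul_sum, smul_smul]
          rw [Finset.sum_comm]
          simp_rw [← Finset.sum_smul]
          rfl
  have hp : (X r - ∑ s, C (b s) * X s : MvPolynomial (Fin n) F)
      ∈ Ideal.span (relSet F T) := by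
    rw [← Ideal.Quotient.eq_zero_iff_mem, map_sub, mk_linear, sub_eq_zero]
    exact hgenr
  have hcoeff := span_coeff_lin T hp r
  rw [coeff_sub, coeff_sum] at hcoeff
  have hXr : coeff (Finsupp.single r 1) (X r : MvPolynomial (Fin n) F) = 1 :=
    coeff_X_same r
  have hsum : (∑ s, coeff (Finsupp.single r 1) (C (b s) * X s)) = b r := by
    have : ∀ s : Fin n, coeff (Finsupp.single r 1) (C (b s) * X s)
        = if s = r then b s else 0 := by
      intro s
      rw [coeff_C_mul, X, coeff_monomial]
      by_cases hsr : s = r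
      · rw [if_pos ((Finsupp.single_left_inj one_ne_zero).mpr hsr), if_pos hsr, mul_one]
      · rw [if_neg (fun hcon => hsr ((Finsupp.single_left_inj one_ne_zero).mp hcon)),
          if_neg hsr, mul_zero]
    rw [Finset.sum_congr rfl (fun s _ => this s), Finset.sum_ite_eq',
      if_pos (Finset.mem_univ r)]
  rw [hXr, hsum] at hcoeff
  have hbr : b r = 0 := by
    rw [hb]
    exact Finset.sum_eq_zero fun k _ => by rw [hcol k, mul_zero]
  rw [hbr, sub_zero] at hcoeff
  exact one_ne_zero hcoeff

/-- A matrix in 1-REF isomorphic to the zero matrix is zero. -/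
theorem stmt19 {n : ℕ} (h2 : (2 : F) ≠ 0) (T : Matrix (Fin n) (Fin n) F)
    (hT : SLTM F T) (hREF : Is1REF F T) (h : NTIso F T 0) :
    T = 0 := by
  exact stmt19' F h2 T hT hREF h
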